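/- Let ψ : ℝ³ → ℂ be a continuous compactly supported function. Then the group averaging sesquilinear form evaluated on (ψ, ψ) is real and nonnegative; explicitly, ∫_{ℝ²} [ ∫_{ℝ³} conj(ψ(Θ,Ξ,x)) · ψ(Θ + λ¹, Ξ + λ², x) dΘ dΞ dx ] dλ¹ dλ² = ∫_ℝ | ∫_{ℝ²} ψ(Θ,Ξ,x) dΘ dΞ |² dx ≥ 0, so the group averaging map satisfies the positivity axiom of a rigging map. -/

import Mathlib

open MeasureTheory

/-- The group averaging sesquilinear form of the two abelianised momentum constraints is
positive semidefinite: evaluated on `(ψ, ψ)` it equals the manifestly nonnegative real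
number `∫ |∫ ψ dΘ dΞ|² dx`, so group averaging satisfies the positivity axiom of a
rigging map. -/
theorem group_averaging_positive
    (ψ : ℝ × ℝ × ℝ → ℂ)
    (hψ : Continuous ψ) (hψsupp : HasCompactSupport ψ) :
    ∫ lam : ℝ × ℝ,
        ∫ Q : ℝ × ℝ × ℝ, (starRingEnd ℂ) (ψ Q) * ψ (Q.1 + lam.1, Q.2.1 + lam.2, Q.2.2)
      = ((∫ x : ℝ, ‖∫ p : ℝ × ℝ, ψ (p.1, p.2, x)‖ ^ 2 : ℝ) : ℂ) ∧
      0 ≤ ∫ x : ℝ, ‖∫ p : ℝ × ℝ, ψ (p.1, p.2, x)‖ ^ 2 := by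
  -- bound on the support and on the values of ψ
  obtain ⟨R, hR⟩ := isBounded_iff_forall_norm_le.1 hψsupp.isBounded
  obtain ⟨M, hM⟩ := hψ.bounded_above_of_compact_support hψsupp
  set F : ℝ → ℂ := fun x => ∫ p : ℝ × ℝ, ψ (p.1, p.2, x) with hFdef
  -- F is continuous
  have hFcont : Continuous F := by
    apply continuous_of_dominated
      (bound := (Metric.closedBall (0 : ℝ × ℝ) R).indicator fun _ => M)
    · intro x
      exact (hψ.comp (by fun_prop)).aestronglyMeasurable
    · intro x
      filter_upwards with p
      by_cases hp : p ∈ Metric.closedBall (0 : ℝ × ℝ) R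
      · simpa [Set.indicator_of_mem hp] using hM (p.1, p.2, x)
      · have hz : ψ (p.1, p.2, x) = 0 := by
          by_contra h
          have hmem : ((p.1, p.2, x) : ℝ × ℝ × ℝ) ∈ tsupport ψ := subset_tsupport ψ h
          apply hp
          rw [Metric.mem_closedBall, dist_zero_right, Prod.norm_def]
          refine max_le ?_ ?_
          · exact (norm_fst_le ((p.1, p.2, x) : ℝ × ℝ × ℝ)).trans (hR _ hmem)
          · exact ((norm_fst_le ((p.2, x) : ℝ × ℝ)).trans
              (norm_snd_le ((p.1, p.2, x) : ℝ × ℝ × ℝ))).trans (hR _ hmem)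
        simp [hz, Set.indicator_of_notMem hp]
    · rw [integrable_indicator_iff measurableSet_closedBall]
      exact integrableOn_const measure_closedBall_lt_top.ne
    · filter_upwards with p
      exact hψ.comp (by fun_prop)
  -- the two-argument integrand has compact support
  have hc1 : Continuous (fun z : (ℝ × ℝ) × (ℝ × ℝ × ℝ) =>
      (starRingEnd ℂ) (ψ z.2) * ψ (z.2.1 + z.1.1, z.2.2.1 + z.1.2, z.2.2.2)) := by
    apply Continuous.mul
    · exact Complex.continuous_conj.comp (hψ.comp continuous_snd)
    · exact hψ.comp (by fun_prop)
  have hs1 : HasCompactSupport (fun z : (ℝ × ℝ) × (ℝ × ℝ × ℝ) =>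
      (starRingEnd ℂ) (ψ z.2) * ψ (z.2.1 + z.1.1, z.2.2.1 + z.1.2, z.2.2.2)) := by
    apply HasCompactSupport.intro
      ((isCompact_closedBall (0 : ℝ × ℝ) (2 * R)).prod
        (isCompact_closedBall (0 : ℝ × ℝ × ℝ) R))
    rintro ⟨lam, Q⟩ hz
    by_contra h
    have h1 : ψ Q ≠ 0 := fun h0 => h (by simp [h0])
    have h2 : ψ (Q.1 + lam.1, Q.2.1 + lam.2, Q.2.2) ≠ 0 :=
      fun h0 => h (by simp [h0])
    have hQ : Q ∈ tsupport ψ := subset_tsupport ψ h1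
    have hQ' : ((Q.1 + lam.1, Q.2.1 + lam.2, Q.2.2) : ℝ × ℝ × ℝ) ∈ tsupport ψ :=
      subset_tsupport ψ h2
    apply hz
    constructor
    · rw [Metric.mem_closedBall, dist_zero_right, Prod.norm_def]
      have e1 : ‖lam.1‖ ≤ 2 * R := by
        have := (norm_fst_le ((Q.1 + lam.1, Q.2.1 + lam.2, Q.2.2) : ℝ × ℝ × ℝ)).trans
          (hR _ hQ')
        have h3 := (norm_fst_le Q).trans (hR _ hQ)
        calc ‖lam.1‖ = ‖(Q.1 + lam.1) - Q.1‖ := by ring_nf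
          _ ≤ ‖Q.1 + lam.1‖ + ‖Q.1‖ := norm_sub_le _ _
          _ ≤ 2 * R := by linarith
      have e2 : ‖lam.2‖ ≤ 2 * R := by
        have := ((norm_fst_le (((Q.1 + lam.1, Q.2.1 + lam.2, Q.2.2) : ℝ × ℝ × ℝ)).2).trans
          (norm_snd_le _)).trans (hR _ hQ')
        have h3 := ((norm_fst_le Q.2).trans (norm_snd_le _)).trans (hR _ hQ)
        calc ‖lam.2‖ = ‖(Q.2.1 + lam.2) - Q.2.1‖ := by ring_nf
          _ ≤ ‖Q.2.1 + lam.2‖ + ‖Q.2.1‖ := norm_sub_le _ _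
          _ ≤ 2 * R := by linarith
      exact max_le e1 e2
    · rw [Metric.mem_closedBall, dist_zero_right]
      exact hR _ hQ
  -- auxiliary function g
  set g : ℝ × ℝ × ℝ → ℂ := fun Q => (starRingEnd ℂ) (ψ Q) * F Q.2.2 with hgdef
  have hgcont : Continuous g :=
    (Complex.continuous_conj.comp hψ).mul
      (hFcont.comp (continuous_snd.comp continuous_snd))
  have hgsupp : HasCompactSupport g := by
    apply HasCompactSupport.intro hψsupp
    intro Q hQ
    simp [hgdef, image_eq_zero_of_notMem_tsupport hQ]
  have hgint : Integrable g := hgcont.integrable_of_hasCompactSupport hgsupp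
  -- main computation
  have main : (∫ lam : ℝ × ℝ,
        ∫ Q : ℝ × ℝ × ℝ, (starRingEnd ℂ) (ψ Q) * ψ (Q.1 + lam.1, Q.2.1 + lam.2, Q.2.2))
      = ((∫ x : ℝ, ‖F x‖ ^ 2 : ℝ) : ℂ) := by
    have s1 : (∫ lam : ℝ × ℝ,
          ∫ Q : ℝ × ℝ × ℝ, (starRingEnd ℂ) (ψ Q) * ψ (Q.1 + lam.1, Q.2.1 + lam.2, Q.2.2))
        = ∫ Q : ℝ × ℝ × ℝ,
            ∫ lam : ℝ × ℝ, (starRingEnd ℂ) (ψ Q) * ψ (Q.1 + lam.1, Q.2.1 + lam.2, Q.2.2) :=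
      integral_integral_swap_of_hasCompactSupport
        (f := fun (lam : ℝ × ℝ) (Q : ℝ × ℝ × ℝ) =>
          (starRingEnd ℂ) (ψ Q) * ψ (Q.1 + lam.1, Q.2.1 + lam.2, Q.2.2)) hc1 hs1
    have s2 : ∀ Q : ℝ × ℝ × ℝ,
        (∫ lam : ℝ × ℝ, (starRingEnd ℂ) (ψ Q) * ψ (Q.1 + lam.1, Q.2.1 + lam.2, Q.2.2))
          = g Q := by
      intro Q
      rw [integral_const_mul]
      congr 1
      have h4 : (fun lam : ℝ × ℝ => ψ (Q.1 + lam.1, Q.2.1 + lam.2, Q.2.2))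
          = fun lam : ℝ × ℝ =>
              (fun p : ℝ × ℝ => ψ (p.1, p.2, Q.2.2)) ((Q.1, Q.2.1) + lam) := rfl
      rw [h4]
      exact integral_add_left_eq_self (μ := volume)
        (fun p : ℝ × ℝ => ψ (p.1, p.2, Q.2.2)) ((Q.1, Q.2.1) : ℝ × ℝ)
    have s3 : (∫ Q : ℝ × ℝ × ℝ, g Q) = ∫ z : (ℝ × ℝ) × ℝ, g (z.1.1, z.1.2, z.2) :=
      (MeasureTheory.volume_preserving_prodAssoc.integral_comp
        MeasurableEquiv.prodAssoc.measurableEmbedding g).symm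
    have hzint : Integrable (fun z : (ℝ × ℝ) × ℝ => g (z.1.1, z.1.2, z.2)) :=
      (MeasureTheory.volume_preserving_prodAssoc.integrable_comp_emb
        MeasurableEquiv.prodAssoc.measurableEmbedding).2 hgint
    have s4 : (∫ z : (ℝ × ℝ) × ℝ, g (z.1.1, z.1.2, z.2))
        = ∫ p : ℝ × ℝ, ∫ x : ℝ, g (p.1, p.2, x) := by
      rw [Measure.volume_eq_prod, integral_prod]
      rwa [← Measure.volume_eq_prod]
    have hc5 : Continuous (Function.uncurry fun (p : ℝ × ℝ) (x : ℝ) =>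
        g (p.1, p.2, x)) := hgcont.comp (by fun_prop)
    have hs5 : HasCompactSupport (Function.uncurry fun (p : ℝ × ℝ) (x : ℝ) =>
        g (p.1, p.2, x)) := hgsupp.comp_homeomorph (Homeomorph.prodAssoc ℝ ℝ ℝ)
    have s5 : (∫ p : ℝ × ℝ, ∫ x : ℝ, g (p.1, p.2, x))
        = ∫ x : ℝ, ∫ p : ℝ × ℝ, g (p.1, p.2, x) :=
      integral_integral_swap_of_hasCompactSupport
        (f := fun (p : ℝ × ℝ) (x : ℝ) => g (p.1, p.2, x)) hc5 hs5
    have s6 : ∀ x : ℝ, (∫ p : ℝ × ℝ, g (p.1, p.2, x)) = ((‖F x‖ ^ 2 : ℝ) : ℂ) := by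
      intro x
      have : (∫ p : ℝ × ℝ, g (p.1, p.2, x))
          = (∫ p : ℝ × ℝ, (starRingEnd ℂ) (ψ (p.1, p.2, x))) * F x := by
        simp only [hgdef]
        exact integral_mul_const (F x) fun p : ℝ × ℝ => (starRingEnd ℂ) (ψ (p.1, p.2, x))
      rw [this, integral_conj]
      rw [show (∫ p : ℝ × ℝ, ψ (p.1, p.2, x)) = F x from rfl]
      rw [mul_comm, Complex.mul_conj]
      norm_cast
      simp [Complex.normSq_eq_norm_sq]
    calc (∫ lam : ℝ × ℝ,
          ∫ Q : ℝ × ℝ × ℝ, (starRingEnd ℂ) (ψ Q) * ψ (Q.1 + lam.1, Q.2.1 + lam.2, Q.2.2))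
        = ∫ Q : ℝ × ℝ × ℝ, g Q := by rw [s1]; exact integral_congr_ae (Filter.Eventually.of_forall s2)
      _ = ∫ p : ℝ × ℝ, ∫ x : ℝ, g (p.1, p.2, x) := by rw [s3, s4]
      _ = ∫ x : ℝ, ∫ p : ℝ × ℝ, g (p.1, p.2, x) := s5
      _ = ∫ x : ℝ, ((‖F x‖ ^ 2 : ℝ) : ℂ) := integral_congr_ae (Filter.Eventually.of_forall s6)
      _ = ((∫ x : ℝ, ‖F x‖ ^ 2 : ℝ) : ℂ) := integral_ofReal (f := fun x => ‖F x‖ ^ 2)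
  refine ⟨main, ?_⟩
  exact integral_nonneg fun x => by positivity
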